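/- Let S_0, S_1, ..., S_n be real-valued random variables on a probability space that are independent and identically distributed. Define the conformal p-value p = (1 + #{i ∈ {1,...,n} : S_0 ≤ S_i}) / (n + 1). Then p is a p-variable, i.e., for every α ∈ (0,1), Pr(p ≤ α) ≤ α. -/

import Mathlib

open MeasureTheory ProbabilityTheory
open scoped Classical ENNReal

namespace ConformalAux

/-- The rank count: number of coordinates `i ≠ j` with `x j ≤ x i`. -/
noncomputable def cnt (m : ℕ) (j : Fin m) (x : Fin m → ℝ) : ℕ :=
  (Finset.univ.filter fun i => i ≠ j ∧ x j ≤ x i).card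

lemma measurable_cnt (m : ℕ) (j : Fin m) : Measurable (cnt m j) := by
  have h : cnt m j = fun x => ∑ i : Fin m, if i ≠ j ∧ x j ≤ x i then 1 else 0 := by
    funext x; rw [cnt, Finset.card_filter]
  rw [h]
  refine Finset.measurable_sum _ fun i _ => ?_
  by_cases hij : i = j
  · simp [hij]
  · simp only [hij, Ne, not_false_iff, true_and]
    exact Measurable.ite
      (measurableSet_le (measurable_pi_apply j) (measurable_pi_apply i))
      measurable_const measurable_const

lemma cnt_comp_equiv {m : ℕ} (σ : Equiv.Perm (Fin m)) (j : Fin m) (x : Fin m → ℝ) :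
    cnt m j (x ∘ σ) = cnt m (σ j) x := by
  unfold cnt
  refine Finset.card_bij (fun i _ => σ i) ?_ ?_ ?_
  · intro i hi
    simp only [Finset.mem_filter, Finset.mem_univ, true_and, Function.comp_apply] at hi ⊢
    exact ⟨fun h => hi.1 (σ.injective h), hi.2⟩
  · intro a _ b _ hab; exact σ.injective hab
  · intro b hb
    simp only [Finset.mem_filter, Finset.mem_univ, true_and] at hb
    refine ⟨σ.symm b, ?_, σ.apply_symm_apply b⟩
    simp only [Finset.mem_filter, Finset.mem_univ, true_and, Function.comp_apply,
      σ.apply_symm_apply]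
    refine ⟨fun h => hb.1 ?_, hb.2⟩
    rw [← σ.apply_symm_apply b, h]

/-- Deterministic key lemma: at most `k` indices have rank count `< k`. -/
lemma card_small_rank_le {m : ℕ} (x : Fin m → ℝ) (k : ℕ) :
    (Finset.univ.filter fun j : Fin m => cnt m j x < k).card ≤ k := by
  set A := Finset.univ.filter fun j : Fin m => cnt m j x < k with hA
  rcases A.eq_empty_or_nonempty with h | h
  · simp [h]
  obtain ⟨j₀, hj₀A, hmin⟩ := A.exists_min_image x h
  have hsub : A.erase j₀ ⊆ Finset.univ.filter fun i => i ≠ j₀ ∧ x j₀ ≤ x i := by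
    intro i hi
    rw [Finset.mem_erase] at hi
    simp only [Finset.mem_filter, Finset.mem_univ, true_and]
    exact ⟨hi.1, hmin i hi.2⟩
  have h1 : (A.erase j₀).card ≤ cnt m j₀ x := Finset.card_le_card hsub
  have h2 : cnt m j₀ x < k := by
    have := (Finset.mem_filter.mp (hA ▸ hj₀A)).2
    exact this
  have h3 : (A.erase j₀).card = A.card - 1 := Finset.card_erase_of_mem hj₀A
  have h4 : 0 < A.card := Finset.card_pos.mpr h
  omega

end ConformalAux

open ConformalAux

set_option maxHeartbeats 1000000 in
/-- Let `S 0, S 1, ..., S n` be i.i.d. real-valued random variables on a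
probability space (`S 0` is the test score, `S 1, ..., S n` the calibration scores).
Define the conformal p-value `p(ω) = (1 + #{i ∈ {1,...,n} : S 0 ω ≤ S i ω}) / (n + 1)`.
Then `p` is a p-variable: for every `α ∈ (0,1)`, `Pr(p ≤ α) ≤ α`. -/
theorem conformal_p_value_is_p_variable
    {Ω : Type*} [MeasurableSpace Ω] (μ : Measure Ω) [IsProbabilityMeasure μ]
    (n : ℕ) (S : Fin (n + 1) → Ω → ℝ)
    (hmeas : ∀ i, Measurable (S i))
    (hindep : iIndepFun S μ)
    (hident : ∀ i, IdentDistrib (S i) (S 0) μ μ)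
    (α : ℝ) (hα : α ∈ Set.Ioo (0 : ℝ) 1) :
    μ {ω | (1 + ((Finset.univ.filter
        fun i : Fin (n + 1) => i ≠ 0 ∧ S 0 ω ≤ S i ω).card : ℝ)) / ((n : ℝ) + 1) ≤ α}
      ≤ ENNReal.ofReal α := by
  obtain ⟨hα0, hα1⟩ := hα
  set k : ℕ := ⌊α * ((n : ℝ) + 1)⌋₊ with hkdef
  set X : Ω → (Fin (n + 1) → ℝ) := fun ω i => S i ω with hXdef
  have hXm : Measurable X := measurable_pi_lambda _ hmeas
  set ν : Measure ℝ := μ.map (S 0) with hνdef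
  haveI hνprob : IsProbabilityMeasure ν := Measure.isProbabilityMeasure_map (hmeas 0).aemeasurable
  -- the joint law is a product measure
  have hmap : μ.map X = Measure.pi (fun _ : Fin (n + 1) => ν) := by
    refine (Measure.pi_eq fun s hs => ?_).symm
    rw [Measure.map_apply hXm (MeasurableSet.univ_pi hs)]
    have hpre : X ⁻¹' Set.pi Set.univ s = ⋂ i ∈ Finset.univ, S i ⁻¹' s i := by
      ext ω; simp [hXdef, Set.mem_pi]
    rw [hpre, iIndepFun_iff_measure_inter_preimage_eq_mul.mp hindep Finset.univ
      (fun i _ => hs i)]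
    refine Finset.prod_congr rfl fun i _ => ?_
    rw [hνdef, ← (hident i).map_eq, Measure.map_apply (hmeas i) (hs i)]
  set P : Measure (Fin (n + 1) → ℝ) := Measure.pi (fun _ : Fin (n + 1) => ν) with hPdef
  haveI : IsProbabilityMeasure P := by rw [hPdef]; infer_instance
  set C : Fin (n + 1) → Set (Fin (n + 1) → ℝ) :=
    fun j => {x | cnt (n + 1) j x < k} with hCdef
  have hCmeas : ∀ j, MeasurableSet (C j) := fun j =>
    (measurable_cnt (n + 1) j) measurableSet_Iio
  -- exchangeability: all C j have the same P-measure
  have hswap : ∀ j : Fin (n + 1), P (C j) = P (C 0) := by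
    intro j
    set σ : Equiv.Perm (Fin (n + 1)) := Equiv.swap 0 j with hσ
    set g : (Fin (n + 1) → ℝ) → (Fin (n + 1) → ℝ) := fun x => x ∘ σ with hgdef
    have hgm : Measurable g :=
      measurable_pi_lambda _ fun b => measurable_pi_apply (σ b)
    have hmp : MeasurePreserving g P P := by
      refine ⟨hgm, ?_⟩
      rw [hPdef]
      refine (Measure.pi_eq fun s hs => ?_).symm
      rw [Measure.map_apply hgm (MeasurableSet.univ_pi hs)]
      have hpre : g ⁻¹' Set.pi Set.univ s = Set.pi Set.univ (fun b => s (σ.symm b)) := by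
        ext x
        simp only [Set.mem_preimage, Set.mem_pi, Set.mem_univ, true_implies, hgdef,
          Function.comp_apply]
        exact ⟨fun h b => by simpa using h (σ.symm b), fun h i => by simpa using h (σ i)⟩
      rw [hpre, ← hPdef, hPdef, Measure.pi_pi]
      exact Finset.prod_equiv σ.symm (by simp) (by simp)
    have hset : C j = g ⁻¹' (C 0) := by
      ext x
      simp only [Set.mem_preimage, hgdef, hCdef, Set.mem_setOf_eq, cnt_comp_equiv]
      rw [hσ, Equiv.swap_apply_left]
    rw [hset, hmp.measure_preimage (hCmeas 0).nullMeasurableSet]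
  -- the sum bound coming from the deterministic lemma
  have hsum : ∑ j : Fin (n + 1), P (C j) ≤ (k : ℝ≥0∞) := by
    calc ∑ j : Fin (n + 1), P (C j)
        = ∑ j : Fin (n + 1), ∫⁻ x, (C j).indicator (fun _ => (1 : ℝ≥0∞)) x ∂P :=
          Finset.sum_congr rfl fun j _ => (lintegral_indicator_one (hCmeas j)).symm
      _ = ∫⁻ x, ∑ j : Fin (n + 1), (C j).indicator (fun _ => (1 : ℝ≥0∞)) x ∂P :=
          (lintegral_finset_sum _ (fun j _ => measurable_const.indicator (hCmeas j))).symm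
      _ ≤ ∫⁻ _, (k : ℝ≥0∞) ∂P := by
          refine lintegral_mono fun x => ?_
          have hind : ∑ j : Fin (n + 1), (C j).indicator (fun _ => (1 : ℝ≥0∞)) x
              = ((Finset.univ.filter fun j : Fin (n + 1) => x ∈ C j).card : ℝ≥0∞) := by
            rw [Finset.card_filter]
            push_cast
            refine Finset.sum_congr rfl fun j _ => ?_
            by_cases h : x ∈ C j <;> simp [Set.indicator_apply, h]
          rw [hind]
          have hcard : (Finset.univ.filter fun j : Fin (n + 1) => x ∈ C j).card ≤ k := by
            have := card_small_rank_le (m := n + 1) x k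
            simpa only [hCdef, Set.mem_setOf_eq] using this
          exact Nat.cast_le.mpr (by convert hcard)
      _ = (k : ℝ≥0∞) := by simp
  have hPC0 : (((n + 1 : ℕ)) : ℝ≥0∞) * P (C 0) ≤ (k : ℝ≥0∞) := by
    have : ∑ j : Fin (n + 1), P (C j) = (((n + 1 : ℕ)) : ℝ≥0∞) * P (C 0) := by
      simp [hswap, Finset.sum_const, Finset.card_univ, nsmul_eq_mul]
    rw [← this]; exact hsum
  -- rewrite the target event
  have hsetEq : {ω | (1 + ((Finset.univ.filter
        fun i : Fin (n + 1) => i ≠ 0 ∧ S 0 ω ≤ S i ω).card : ℝ)) / ((n : ℝ) + 1) ≤ α}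
      = X ⁻¹' (C 0) := by
    ext ω
    simp only [Set.mem_setOf_eq, Set.mem_preimage, hCdef, hXdef, cnt]
    have hpos : (0 : ℝ) < (n : ℝ) + 1 := by positivity
    rw [div_le_iff₀ hpos]
    set c : ℕ := (Finset.univ.filter fun i : Fin (n + 1) => i ≠ 0 ∧ S 0 ω ≤ S i ω).card
    constructor
    · intro h
      have hle : ((c + 1 : ℕ) : ℝ) ≤ α * ((n : ℝ) + 1) := by push_cast; linarith
      have := (Nat.le_floor_iff (by positivity)).mpr hle
      omega
    · intro h
      have hle : (c + 1 : ℕ) ≤ k := by omega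
      have := (Nat.le_floor_iff (le_of_lt (by positivity : (0:ℝ) < α * ((n:ℝ)+1)))).mp hle
      push_cast at this
      linarith
  have hμeq : μ (X ⁻¹' (C 0)) = P (C 0) := by
    rw [← hmap, Measure.map_apply hXm (hCmeas 0)]
  rw [hsetEq, hμeq]
  -- conclude
  have hk2 : (k : ℝ≥0∞) ≤ (((n + 1 : ℕ)) : ℝ≥0∞) * ENNReal.ofReal α := by
    have h1 : (k : ℝ) ≤ α * ((n : ℝ) + 1) := Nat.floor_le (by positivity)
    have h2 : (k : ℝ≥0∞) = ENNReal.ofReal (k : ℝ) := (ENNReal.ofReal_natCast k).symm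
    rw [h2]
    calc ENNReal.ofReal (k : ℝ) ≤ ENNReal.ofReal (α * ((n : ℝ) + 1)) :=
          ENNReal.ofReal_le_ofReal h1
      _ = (((n + 1 : ℕ)) : ℝ≥0∞) * ENNReal.ofReal α := by
          rw [ENNReal.ofReal_mul hα0.le, mul_comm]
          congr 1
          rw [← ENNReal.ofReal_natCast (n + 1)]
          norm_num
  have hfin := hPC0.trans hk2
  have hne0 : (((n + 1 : ℕ)) : ℝ≥0∞) ≠ 0 := Nat.cast_ne_zero.mpr (by omega)
  have hnetop : (((n + 1 : ℕ)) : ℝ≥0∞) ≠ ⊤ := ENNReal.natCast_ne_top _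
  exact (ENNReal.mul_le_mul_iff_right hne0 hnetop).mp hfin
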